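/- Let m, M, a > 0 and let L₁ ∈ (0, a/2) satisfy the collinear critical-point equation M·L₁/a^3 − m/(4L₁²) − M/(2(L₁+a/2)²) + M/(2(a/2−L₁)²) = 0. Then γ := ∂²V/∂y²(L₁, 0) = M/a^3 − m/(4L₁^3) − M/(2(L₁+a/2)^3) − M/(2(a/2−L₁)^3) is strictly negative. -/

import Mathlib

theorem stmt10 (m M a : ℝ) (hm : 0 < m) (hM : 0 < M) (ha : 0 < a)
    (L₁ : ℝ) (hL₁ : L₁ ∈ Set.Ioo (0:ℝ) (a/2))
    (hcrit : M*L₁/a^3 - m/(4*L₁^2) - M/(2*(L₁+a/2)^2) + M/(2*(a/2-L₁)^2) = 0) :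
    M/a^3 - m/(4*L₁^3) - M/(2*(L₁+a/2)^3) - M/(2*(a/2-L₁)^3) < 0 := by
  obtain ⟨h0, h2⟩ := hL₁
  have hd1 : 0 < L₁ + a/2 := by linarith
  have hd2 : 0 < a/2 - L₁ := by linarith
  have ha' : a ≠ 0 := ne_of_gt ha
  have hL' : L₁ ≠ 0 := ne_of_gt h0
  have hd1' : (L₁ + a/2) ≠ 0 := ne_of_gt hd1
  have hd2' : (a/2 - L₁) ≠ 0 := ne_of_gt hd2
  have h3 : a - 2*L₁ ≠ 0 := by intro h; apply hd2'; linarith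
  have h3' : a - L₁*2 ≠ 0 := by intro h; apply hd2'; linarith
  -- eliminate m using the critical point equation
  have hmval : m = 4*L₁^2 * (M*L₁/a^3 - M/(2*(L₁+a/2)^2) + M/(2*(a/2-L₁)^2)) := by
    field_simp at hcrit ⊢
    linarith
  have key : M/a^3 - m/(4*L₁^3) - M/(2*(L₁+a/2)^3) - M/(2*(a/2-L₁)^3)
      = (M*a/(4*L₁)) * (((a/2-L₁)^3 - (L₁+a/2)^3) / ((L₁+a/2)^3 * (a/2-L₁)^3)) := by
    rw [hmval]
    field_simp
    ring
  rw [key]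
  apply mul_neg_of_pos_of_neg
  · positivity
  · apply div_neg_of_neg_of_pos
    · have : (a/2-L₁) < (L₁+a/2) := by linarith
      have h4 := pow_lt_pow_left₀ this (le_of_lt hd2) (by norm_num : (3:ℕ) ≠ 0)
      linarith
    · positivity
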